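/- Let f : ℝ → ℝ be bounded by M, nondecreasing on (-∞, −p] and nonincreasing on [p, ∞) for some p > 0, with f → 0 at ±∞, and suppose the improper Fourier integral 𝓛f(iξ) = ∫_ℝ e^{−iξx} f(x) dx converges for ξ ≠ 0. Then |𝓛f(iξ)| ≤ 4M/|ξ| + 2pM for all ξ ≠ 0. In particular ξ ↦ ξ/(1+ξ) · |𝓛f(iξ)| is bounded on (0, ∞). -/

import Mathlib

open Filter Set MeasureTheory Complex

lemma norm_exp_aux (ξ x : ℝ) : ‖Complex.exp (-Complex.I * ξ * x)‖ = 1 := by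
  have h : -Complex.I * (ξ : ℂ) * (x : ℂ) = ((-(ξ * x) : ℝ) : ℂ) * Complex.I := by
    push_cast; ring
  rw [h, Complex.norm_exp_ofReal_mul_I]

/-- Second-mean-value-type bound for the oscillatory integral of a nonnegative bounded
antitone function. -/
lemma tail_bound (g : ℝ → ℝ) (M a b ξ : ℝ) (hξ : ξ ≠ 0) (hab : a ≤ b)
    (hg : Antitone g) (h0 : ∀ x, 0 ≤ g x) (hM : ∀ x, g x ≤ M) :
    ‖∫ x in a..b, Complex.exp (-Complex.I * ξ * x) * (g x : ℂ)‖ ≤ 2 * M / |ξ| := by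
  have hM0 : 0 ≤ M := (h0 0).trans (hM 0)
  have hξ' : (0 : ℝ) < |ξ| := abs_pos.mpr hξ
  set e : ℝ → ℂ := fun x => Complex.exp (-Complex.I * ξ * x) with he
  set c' : ℂ := -Complex.I * ξ with hc'
  have hc'0 : c' ≠ 0 := by
    simp only [hc', neg_mul, neg_ne_zero, mul_ne_zero_iff]
    exact ⟨Complex.I_ne_zero, Complex.ofReal_ne_zero.mpr hξ⟩
  have hnormc : ‖c'‖ = |ξ| := by
    simp [hc', map_mul]
  have hnorme : ∀ x : ℝ, ‖e x‖ = 1 := fun x => norm_exp_aux ξ x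
  have hec : Continuous e := by fun_prop
  have hgm : Measurable g := hg.measurable
  set F : ℝ → ℝ → ℂ := fun x t => if t < g x then e x else 0 with hF
  have hFmeas : AEStronglyMeasurable (Function.uncurry F)
      ((volume.restrict (Ioc a b)).prod (volume.restrict (Ioc 0 M))) := by
    have hD : MeasurableSet {q : ℝ × ℝ | q.2 < g q.1} :=
      measurableSet_lt measurable_snd (hgm.comp measurable_fst)
    have hFe : Function.uncurry F =
        Set.indicator {q : ℝ × ℝ | q.2 < g q.1} (fun q => e q.1) := by
      funext q
      simp [Function.uncurry, hF, Set.indicator_apply, Set.mem_setOf_eq]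
    rw [hFe]
    exact (((hec.comp continuous_fst).measurable).indicator hD).aestronglyMeasurable
  have hFint : Integrable (Function.uncurry F)
      ((volume.restrict (Ioc a b)).prod (volume.restrict (Ioc 0 M))) := by
    refine Integrable.mono' (integrable_const 1) hFmeas (ae_of_all _ ?_)
    rintro ⟨x, t⟩
    simp only [Function.uncurry, hF]
    split
    · rw [hnorme]
    · simp
  have hinner : ∀ x : ℝ, (∫ t in Ioc (0 : ℝ) M, F x t) = (g x) • e x := by
    intro x
    have h1 : (fun t => F x t) = Set.indicator (Iio (g x)) (fun _ => e x) := by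
      funext t
      simp [hF, Set.indicator_apply, Set.mem_Iio]
    rw [h1, MeasureTheory.integral_indicator measurableSet_Iio,
      Measure.restrict_restrict measurableSet_Iio]
    have hset : Iio (g x) ∩ Ioc 0 M = Ioo 0 (g x) := by
      ext t
      simp only [mem_inter_iff, mem_Iio, mem_Ioc, mem_Ioo]
      constructor
      · rintro ⟨h1', h2', _⟩; exact ⟨h2', h1'⟩
      · rintro ⟨h1', h2'⟩; exact ⟨h2', h1', h2'.le.trans (hM x)⟩
    rw [hset, setIntegral_const, Real.volume_real_Ioo_of_le (h0 x), sub_zero]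
  rw [intervalIntegral.integral_of_le hab]
  have hrw : (∫ x in Ioc a b, e x * (g x : ℂ)) =
      ∫ x in Ioc a b, ∫ t in Ioc (0 : ℝ) M, F x t := by
    refine integral_congr_ae (ae_of_all _ fun x => ?_)
    show e x * (g x : ℂ) = ∫ t in Ioc (0 : ℝ) M, F x t
    rw [hinner x, Complex.real_smul]; ring
  rw [hrw, MeasureTheory.integral_integral_swap hFint]
  have hinner2 : ∀ t : ℝ, ‖∫ x in Ioc a b, F x t‖ ≤ 2 / |ξ| := by
    intro t
    have hSm : MeasurableSet {x : ℝ | t < g x} :=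
      measurableSet_lt measurable_const hgm
    have h1 : (fun x => F x t) = Set.indicator {x : ℝ | t < g x} e := by
      funext x
      simp [hF, Set.indicator_apply, Set.mem_setOf_eq]
    rw [h1, MeasureTheory.integral_indicator hSm, Measure.restrict_restrict hSm]
    set S : Set ℝ := {x : ℝ | t < g x} ∩ Ioc a b with hS
    by_cases hne : S.Nonempty
    · have hbddS : BddAbove (insert a S) := by
        refine (bddAbove_Icc (a := a) (b := b)).mono ?_
        rintro x (rfl | hx)
        · exact ⟨le_refl _, hab⟩
        · exact ⟨hx.2.1.le, hx.2.2⟩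
      set c := sSup (insert a S) with hcdef
      have hac : a ≤ c := le_csSup hbddS (mem_insert a S)
      have hsub1 : S ⊆ Ioc a c := fun x hx =>
        ⟨hx.2.1, le_csSup hbddS (mem_insert_of_mem a hx)⟩
      have hsub2 : Ioo a c ⊆ S := by
        intro y hy
        obtain ⟨x, hxmem, hyx⟩ := exists_lt_of_lt_csSup ⟨a, mem_insert a S⟩ hy.2
        rcases hxmem with rfl | hxS
        · exact absurd hy.1 (not_lt.mpr hyx.le)
        · exact ⟨lt_of_lt_of_le hxS.1 (hg hyx.le), hy.1, hyx.le.trans hxS.2.2⟩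
      have hae : S =ᵐ[volume] Ioc a c := by
        rw [MeasureTheory.ae_eq_set]
        constructor
        · rw [Set.diff_eq_empty.mpr hsub1]; exact measure_empty
        · refine measure_mono_null (fun y hy => ?_) (Real.volume_singleton (a := c))
          rcases lt_or_eq_of_le hy.1.2 with h | h
          · exact absurd (hsub2 ⟨hy.1.1, h⟩) hy.2
          · exact h
      rw [setIntegral_congr_set hae, ← intervalIntegral.integral_of_le hac]
      have hee : e = fun x : ℝ => Complex.exp (c' * ↑x) := by
        funext x
        show Complex.exp (-Complex.I * ↑ξ * ↑x) = Complex.exp (c' * ↑x)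
        rw [hc']
      rw [hee, integral_exp_mul_complex hc'0]
      rw [norm_div, hnormc]
      have e1 : ‖Complex.exp (c' * (c : ℝ))‖ = 1 := by
        rw [hc']; exact norm_exp_aux ξ c
      have e2 : ‖Complex.exp (c' * (a : ℝ))‖ = 1 := by
        rw [hc']; exact norm_exp_aux ξ a
      have hnum : ‖Complex.exp (c' * (c : ℝ)) - Complex.exp (c' * (a : ℝ))‖ ≤ 2 := by
        refine (norm_sub_le _ _).trans ?_
        rw [e1, e2]; norm_num
      gcongr
    · rw [not_nonempty_iff_eq_empty] at hne
      rw [hne]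
      simp only [Measure.restrict_empty, integral_zero_measure, norm_zero]
      positivity
  calc ‖∫ t in Ioc (0 : ℝ) M, ∫ x in Ioc a b, F x t‖
      ≤ (2 / |ξ|) * (volume (Ioc (0 : ℝ) M)).toReal := by
        refine norm_setIntegral_le_of_norm_le_const ?_
          fun t _ => hinner2 t
        exact measure_Ioc_lt_top
    _ = 2 * M / |ξ| := by
        rw [Real.volume_Ioc, sub_zero, ENNReal.toReal_ofReal hM0]
        ring

theorem stmt_10 (f : ℝ → ℝ) (M p : ℝ) (hp : 0 < p)
    (hbdd : ∀ x, |f x| ≤ M)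
    (hmono : MonotoneOn f (Iic (-p))) (hanti : AntitoneOn f (Ici p))
    (hlim_top : Tendsto f atTop (nhds 0)) (hlim_bot : Tendsto f atBot (nhds 0))
    (L : ℝ → ℂ)
    (hL : ∀ ξ : ℝ, ξ ≠ 0 →
      Tendsto (fun R : ℝ => ∫ x in (-R)..R, Complex.exp (-Complex.I * ξ * x) * f x)
        atTop (nhds (L ξ))) :
    (∀ ξ : ℝ, ξ ≠ 0 → ‖L ξ‖ ≤ 4 * M / |ξ| + 2 * p * M) ∧
    ∃ C : ℝ, ∀ ξ : ℝ, 0 < ξ → ξ / (1 + ξ) * ‖L ξ‖ ≤ C := by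
  have hM0 : 0 ≤ M := (abs_nonneg _).trans (hbdd 0)
  -- nonnegativity of f on the tails
  have hpos_right : ∀ x, p ≤ x → 0 ≤ f x := by
    intro x hx
    refine le_of_tendsto hlim_top ?_
    filter_upwards [eventually_ge_atTop x] with y hy
    exact hanti (mem_Ici.mpr hx) (mem_Ici.mpr (hx.trans hy)) hy
  have hpos_left : ∀ x, x ≤ -p → 0 ≤ f x := by
    intro x hx
    refine le_of_tendsto hlim_bot ?_
    filter_upwards [eventually_le_atBot x] with y hy
    exact hmono (mem_Iic.mpr (hy.trans hx)) (mem_Iic.mpr hx) hy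
  have key : ∀ ξ : ℝ, ξ ≠ 0 → ‖L ξ‖ ≤ 4 * M / |ξ| + 2 * p * M := by
    intro ξ hξ
    have hξ' : (0 : ℝ) < |ξ| := abs_pos.mpr hξ
    have hBnn : (0 : ℝ) ≤ 4 * M / |ξ| + 2 * p * M := by positivity
    set e : ℝ → ℂ := fun x => Complex.exp (-Complex.I * ξ * x) with he
    by_cases hint : IntegrableOn (fun x => e x * (f x : ℂ)) (Ioc (-p) p) volume
    · -- integrable case : estimate each truncated integral
      have hbound : ∀ R : ℝ, p ≤ R →
          ‖∫ x in (-R)..R, e x * (f x : ℂ)‖ ≤ 4 * M / |ξ| + 2 * p * M := by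
        intro R hR
        have hpR : p ≤ R := hR
        have hnpR : -R ≤ -p := neg_le_neg hR
        have hpp : -p ≤ p := by linarith
        -- right clamped function
        set gR : ℝ → ℝ := fun x => f (max p (min x R)) with hgR
        have hgR_anti : Antitone gR := by
          intro x y hxy
          have hx : p ≤ max p (min x R) := le_max_left _ _
          have hy : p ≤ max p (min y R) := le_max_left _ _
          exact hanti (mem_Ici.mpr hx) (mem_Ici.mpr hy) (max_le_max (le_refl p) (min_le_min hxy (le_refl R)))
        have hgR_eq : ∀ x ∈ Icc p R, gR x = f x := by
          intro x hx
          rw [hgR]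
          simp only [min_eq_left hx.2, max_eq_right hx.1]
        have hgR_pos : ∀ x, 0 ≤ gR x := fun x => hpos_right _ (le_max_left _ _)
        have hgR_M : ∀ x, gR x ≤ M := fun x => (le_abs_self _).trans (hbdd _)
        -- left clamped function (after reflection) : u ↦ f (-(clamp u))
        set gL : ℝ → ℝ := fun u => f (-(max p (min u R))) with hgL
        have hclamp : ∀ u, -(max p (min u R)) ≤ -p :=
          fun u => neg_le_neg (le_max_left _ _)
        have hgL_anti : Antitone gL := by
          intro x y hxy
          refine hmono (mem_Iic.mpr (hclamp y)) (mem_Iic.mpr (hclamp x)) ?_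
          exact neg_le_neg (max_le_max (le_refl p) (min_le_min hxy (le_refl R)))
        have hgL_pos : ∀ u, 0 ≤ gL u := fun u => hpos_left _ (hclamp u)
        have hgL_M : ∀ u, gL u ≤ M := fun u => (le_abs_self _).trans (hbdd _)
        -- integrability of the three pieces
        have hi2 : IntervalIntegrable (fun x => e x * (f x : ℂ)) volume (-p) p :=
          (intervalIntegrable_iff_integrableOn_Ioc_of_le hpp).mpr hint
        have hmeas_e : Continuous e := by fun_prop
        have hi3 : IntervalIntegrable (fun x => e x * (f x : ℂ)) volume p R := by
          rw [intervalIntegrable_iff_integrableOn_Ioc_of_le hpR]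
          have : IntegrableOn (fun x => e x * (gR x : ℂ)) (Ioc p R) volume := by
            refine Integrable.mono' (integrable_const M)
              ((hmeas_e.measurable.mul
                (Complex.measurable_ofReal.comp hgR_anti.measurable)).aestronglyMeasurable)
              (ae_of_all _ fun x => ?_)
            rw [norm_mul, norm_exp_aux, one_mul, Complex.norm_real, Real.norm_eq_abs]
            exact hbdd _
          refine this.congr_fun (fun x hx => ?_) measurableSet_Ioc
          beta_reduce
          rw [hgR_eq x ⟨hx.1.le, hx.2⟩]
        have hi1 : IntervalIntegrable (fun x => e x * (f x : ℂ)) volume (-R) (-p) := by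
          rw [intervalIntegrable_iff_integrableOn_Ioc_of_le hnpR]
          have hmf : Measurable fun x : ℝ => f (min (-p) (max x (-R))) := by
            have : Monotone fun x : ℝ => f (min (-p) (max x (-R))) := by
              intro x y hxy
              refine hmono (mem_Iic.mpr (min_le_left _ _)) (mem_Iic.mpr (min_le_left _ _)) ?_
              exact min_le_min (le_refl _) (max_le_max hxy (le_refl _))
            exact this.measurable
          have : IntegrableOn (fun x => e x * ((f (min (-p) (max x (-R))) : ℝ) : ℂ))
              (Ioc (-R) (-p)) volume := by
            refine Integrable.mono' (integrable_const M)
              ((hmeas_e.measurable.mul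
                (Complex.measurable_ofReal.comp hmf)).aestronglyMeasurable)
              (ae_of_all _ fun x => ?_)
            rw [norm_mul, norm_exp_aux, one_mul, Complex.norm_real, Real.norm_eq_abs]
            exact hbdd _
          refine this.congr_fun (fun x hx => ?_) measurableSet_Ioc
          have h1 : x ≤ -p := hx.2
          have h2 : -R ≤ x := hx.1.le
          beta_reduce
          rw [max_eq_left h2, min_eq_right h1]
        -- split the integral
        have hsplit : (∫ x in (-R)..R, e x * (f x : ℂ)) =
            (∫ x in (-R)..(-p), e x * (f x : ℂ)) +
            (∫ x in (-p)..p, e x * (f x : ℂ)) +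
            (∫ x in p..R, e x * (f x : ℂ)) := by
          rw [← intervalIntegral.integral_add_adjacent_intervals (hi1.trans hi2) hi3,
            ← intervalIntegral.integral_add_adjacent_intervals hi1 hi2]
        -- middle estimate
        have hmid : ‖∫ x in (-p)..p, e x * (f x : ℂ)‖ ≤ 2 * p * M := by
          have := intervalIntegral.norm_integral_le_of_norm_le_const
            (C := M) (a := -p) (b := p) (f := fun x => e x * (f x : ℂ))
            (fun x _ => by
              rw [norm_mul, norm_exp_aux, one_mul, Complex.norm_real, Real.norm_eq_abs]
              exact hbdd x)
          refine this.trans (le_of_eq ?_)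
          rw [_root_.abs_of_nonneg (by linarith : (0:ℝ) ≤ p - -p)]
          ring
        -- right tail estimate
        have hright : ‖∫ x in p..R, e x * (f x : ℂ)‖ ≤ 2 * M / |ξ| := by
          have hcongr : (∫ x in p..R, e x * (f x : ℂ)) =
              ∫ x in p..R, Complex.exp (-Complex.I * ξ * x) * (gR x : ℂ) := by
            refine intervalIntegral.integral_congr fun x hx => ?_
            rw [Set.uIcc_of_le hpR] at hx
            rw [he, hgR_eq x hx]
          rw [hcongr]
          exact tail_bound gR M p R ξ hξ hpR hgR_anti hgR_pos hgR_M
        -- left tail estimate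
        have hleft : ‖∫ x in (-R)..(-p), e x * (f x : ℂ)‖ ≤ 2 * M / |ξ| := by
          have hflip : (∫ x in p..R, (fun y : ℝ => e y * (f y : ℂ)) (-x)) =
              ∫ x in (-R)..(-p), e x * (f x : ℂ) :=
            intervalIntegral.integral_comp_neg (fun y : ℝ => e y * (f y : ℂ))
          rw [← hflip]
          have hcongr : (∫ x in p..R, (fun y : ℝ => e y * (f y : ℂ)) (-x)) =
              ∫ x in p..R, Complex.exp (-Complex.I * (-ξ : ℝ) * x) * (gL x : ℂ) := by
            refine intervalIntegral.integral_congr fun x hx => ?_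
            rw [Set.uIcc_of_le hpR] at hx
            have h1 : max p (min x R) = x := by
              rw [min_eq_left hx.2, max_eq_right hx.1]
            simp only [he, hgL, h1]
            congr 1
            push_cast
            ring
          rw [hcongr]
          have := tail_bound gL M p R (-ξ) (neg_ne_zero.mpr hξ) hpR hgL_anti hgL_pos hgL_M
          rwa [abs_neg] at this
        calc ‖∫ x in (-R)..R, e x * (f x : ℂ)‖
            ≤ ‖(∫ x in (-R)..(-p), e x * (f x : ℂ)) +
                (∫ x in (-p)..p, e x * (f x : ℂ))‖ +
              ‖∫ x in p..R, e x * (f x : ℂ)‖ := by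
              rw [hsplit]; exact norm_add_le _ _
          _ ≤ ‖∫ x in (-R)..(-p), e x * (f x : ℂ)‖ +
              ‖∫ x in (-p)..p, e x * (f x : ℂ)‖ +
              ‖∫ x in p..R, e x * (f x : ℂ)‖ := by
              gcongr; exact norm_add_le _ _
          _ ≤ 2 * M / |ξ| + 2 * p * M + 2 * M / |ξ| := by
              gcongr
          _ = 4 * M / |ξ| + 2 * p * M := by ring
      refine le_of_tendsto ((hL ξ hξ).norm) ?_
      filter_upwards [eventually_ge_atTop p] with R hR
      exact hbound R hR
    · -- non-integrable case : all truncated integrals vanish, so L ξ = 0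
      have hzero : ∀ᶠ R in atTop,
          (∫ x in (-R)..R, e x * (f x : ℂ)) = 0 := by
        filter_upwards [eventually_ge_atTop p] with R hR
        refine intervalIntegral.integral_undef fun hInt => hint ?_
        have hsub : IntervalIntegrable (fun x => e x * (f x : ℂ)) volume (-p) p := by
          refine hInt.mono_set ?_
          rw [Set.uIcc_of_le (by linarith : -p ≤ p),
            Set.uIcc_of_le (by linarith : -R ≤ R)]
          exact Icc_subset_Icc (by linarith) (by linarith)
        exact (intervalIntegrable_iff_integrableOn_Ioc_of_le (by linarith)).mp hsub
      have : L ξ = 0 :=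
        tendsto_nhds_unique (hL ξ hξ)
          (Tendsto.congr' (Filter.EventuallyEq.symm hzero) tendsto_const_nhds)
      rw [this, norm_zero]
      exact hBnn
  refine ⟨key, ⟨4 * M + 2 * p * M, fun ξ hξ => ?_⟩⟩
  have hξ0 : ξ ≠ 0 := ne_of_gt hξ
  have h1 : ‖L ξ‖ ≤ 4 * M / ξ + 2 * p * M := by
    have := key ξ hξ0
    rwa [abs_of_pos hξ] at this
  have hfrac0 : (0 : ℝ) ≤ ξ / (1 + ξ) := by positivity
  have hfrac1 : ξ / (1 + ξ) ≤ 1 := by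
    rw [div_le_one (by linarith)]; linarith
  calc ξ / (1 + ξ) * ‖L ξ‖ ≤ ξ / (1 + ξ) * (4 * M / ξ + 2 * p * M) := by
        exact mul_le_mul_of_nonneg_left h1 hfrac0
    _ = 4 * M / (1 + ξ) + ξ / (1 + ξ) * (2 * p * M) := by
        field_simp
    _ ≤ 4 * M + 2 * p * M := by
        have h2 : 4 * M / (1 + ξ) ≤ 4 * M := by
          rw [div_le_iff₀ (by linarith)]
          nlinarith
        have h3 : ξ / (1 + ξ) * (2 * p * M) ≤ 2 * p * M := by
          have : (0:ℝ) ≤ 2 * p * M := by positivity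
          nlinarith
        linarith
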